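/- For φ ∈ [0,π/2], the operator cos(φ)·(R⊗1) + i·sin(φ)·(R^{−1}⊗1)·S on ℂ⁴⊗ℓ²(ℤ²) is unitary. -/

import Mathlib

open Complex

noncomputable section

/-- `ℂ⁴ ⊗ ℓ²(ℤ²)`; the coin index `{±1,±2}` is encoded as `Fin 2 × Bool`. -/
abbrev H4 := lp (fun _ : (Fin 2 × Bool) × (ℤ × ℤ) => ℂ) 2

def e4 (τ : Fin 2 × Bool) (j : ℤ × ℤ) : H4 := lp.single 2 (τ, j) 1

def rho (τ : Fin 2 × Bool) : Fin 2 × Bool := if τ.1 = 0 then (1, τ.2) else (0, !τ.2)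

def rhoInv (τ : Fin 2 × Bool) : Fin 2 × Bool := if τ.1 = 1 then (0, τ.2) else (1, !τ.2)

def step4 (τ : Fin 2 × Bool) (m : ℤ × ℤ) : ℤ × ℤ :=
  if τ.1 = 0 then (m.1 + (if τ.2 then 1 else -1), m.2)
  else (m.1, m.2 + (if τ.2 then 1 else -1))

lemma inner_e4 (τ σ : Fin 2 × Bool) (j m : ℤ × ℤ) :
    (inner ℂ (e4 τ j) (e4 σ m) : ℂ) = if (τ, j) = (σ, m) then 1 else 0 := by
  rw [e4, e4, lp.inner_single_left]
  rcases eq_or_ne ((τ, j) : (Fin 2 × Bool) × (ℤ × ℤ)) (σ, m) with h | h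
  · rw [h, lp.single_apply_self, if_pos rfl]; simp [RCLike.inner_apply]
  · rw [lp.single_apply_ne _ _ _ h, if_neg h]; simp

lemma rho_inj : Function.Injective rho := by decide
lemma rhoInv_rho : ∀ τ, rhoInv (rho τ) = τ := by decide
lemma rho_rhoInv : ∀ τ, rho (rhoInv τ) = τ := by decide
lemma rho_rho_eq : ∀ σ, rho (rho σ) = rhoInv (rhoInv σ) := by decide

lemma step4_inj (τ : Fin 2 × Bool) : Function.Injective (step4 τ) := by
  rcases τ with ⟨t, b⟩
  intro m m' h
  fin_cases t <;> cases b <;>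
    · simp only [step4] at h
      simp_all [Prod.ext_iff]

lemma step4_rho_rhoInv (σ : Fin 2 × Bool) (m : ℤ × ℤ) :
    step4 (rho σ) (step4 (rhoInv σ) m) = m := by
  rcases σ with ⟨t, b⟩
  fin_cases t <;> cases b <;> simp [step4, rho, rhoInv]

lemma cross_iff (τ σ : Fin 2 × Bool) (j m : ℤ × ℤ) :
    (rho τ = rhoInv σ ∧ j = step4 σ m) ↔ (rhoInv τ = rho σ ∧ step4 τ j = m) := by
  rcases τ with ⟨t, b⟩; rcases σ with ⟨u, c⟩
  fin_cases t <;> fin_cases u <;> cases b <;> cases c <;>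
    simp_all [rho, rhoInv, step4, Prod.ext_iff] <;> omega

lemma rhoInv_inj : Function.Injective rhoInv := by decide

/-- For `φ ∈ [0, π/2]` the operator `cos φ (R⊗1) + i sin φ (R⁻¹⊗1) S` on
`ℂ⁴ ⊗ ℓ²(ℤ²)` is unitary. -/
theorem cc_free_part_unitary (φ : ℝ) (hφ : φ ∈ Set.Icc 0 (Real.pi / 2))
    (RI : H4 →L[ℂ] H4) (hRI : ∀ τ j, RI (e4 τ j) = e4 (rho τ) j)
    (RIinv : H4 →L[ℂ] H4) (hRIinv : ∀ τ j, RIinv (e4 τ j) = e4 (rhoInv τ) j)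
    (S : H4 →L[ℂ] H4) (hS : ∀ τ j, S (e4 τ j) = e4 τ (step4 τ j)) :
    ∃ W : H4 ≃ₗᵢ[ℂ] H4, ∀ x : H4,
      W x = (Real.cos φ : ℂ) • RI x + (Complex.I * Real.sin φ) • RIinv (S x) := by
  classical
  set c : ℂ := (Real.cos φ : ℂ) with hc
  set s : ℂ := (Real.sin φ : ℂ) with hs'
  have hcs : c ^ 2 + s ^ 2 = 1 := by
    rw [hc, hs']
    norm_cast
    exact Real.cos_sq_add_sin_sq φ
  have hI : Complex.I ^ 2 = -1 := Complex.I_sq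
  have hcc : (starRingEnd ℂ) c = c := by rw [hc]; exact Complex.conj_ofReal _
  have hss : (starRingEnd ℂ) s = s := by rw [hs']; exact Complex.conj_ofReal _
  set v : (Fin 2 × Bool) × (ℤ × ℤ) → H4 := fun i =>
    c • e4 (rho i.1) i.2 + (Complex.I * s) • e4 (rhoInv i.1) (step4 i.1 i.2) with hv_def
  -- orthonormality
  have hv : Orthonormal ℂ v := by
    rw [orthonormal_iff_ite]
    rintro ⟨τ, j⟩ ⟨σ, m⟩
    have h1 : ((rho τ, j) = ((rho σ, m) : (Fin 2 × Bool) × (ℤ × ℤ))) ↔ (τ, j) = (σ, m) := by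
      simp [Prod.ext_iff, rho_inj.eq_iff]
    have h4 : ((rhoInv τ, step4 τ j) = ((rhoInv σ, step4 σ m) : (Fin 2 × Bool) × (ℤ × ℤ)))
        ↔ (τ, j) = (σ, m) := by
      simp only [Prod.mk.injEq, rhoInv_inj.eq_iff]
      constructor
      · rintro ⟨rfl, h⟩; exact ⟨rfl, step4_inj τ h⟩
      · rintro ⟨rfl, rfl⟩; exact ⟨rfl, rfl⟩
    have h23 : ((rho τ, j) = ((rhoInv σ, step4 σ m) : (Fin 2 × Bool) × (ℤ × ℤ)))
        ↔ ((rhoInv τ, step4 τ j) = ((rho σ, m) : (Fin 2 × Bool) × (ℤ × ℤ))) := by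
      simpa [Prod.ext_iff] using cross_iff τ σ j m
    simp only [hv_def, inner_add_left, inner_add_right, inner_smul_left, inner_smul_right,
      inner_e4, map_mul, Complex.conj_I, hcc, hss]
    rw [if_congr h1 rfl rfl, if_congr h4 rfl rfl, if_congr h23 rfl rfl]
    split_ifs <;> first | linear_combination hcs - s ^ 2 * hI | ring
  -- totality
  have key : ∀ (σ : Fin 2 × Bool) (m : ℤ × ℤ),
      e4 σ m = c • v (rhoInv σ, m) - (Complex.I * s) • v (rho σ, step4 (rhoInv σ) m) := by
    intro σ m
    simp only [hv_def, rho_rhoInv, rhoInv_rho, step4_rho_rhoInv, ← rho_rho_eq]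
    match_scalars <;>
      first | linear_combination hcs - s ^ 2 * hI | linear_combination s ^ 2 * hI - hcs | ring
  have hmem : ∀ (σ : Fin 2 × Bool) (m : ℤ × ℤ), e4 σ m ∈ Submodule.span ℂ (Set.range v) := by
    intro σ m
    rw [key σ m]
    exact sub_mem (Submodule.smul_mem _ _ (Submodule.subset_span ⟨_, rfl⟩))
      (Submodule.smul_mem _ _ (Submodule.subset_span ⟨_, rfl⟩))
  have hsp : ⊤ ≤ (Submodule.span ℂ (Set.range v)).topologicalClosure := by
    rintro x -
    have hx : HasSum (fun i => lp.single 2 i (x i)) x := lp.hasSum_single ENNReal.ofNat_ne_top x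
    refine mem_closure_of_tendsto hx (Filter.Eventually.of_forall fun t => ?_)
    refine Submodule.sum_mem _ fun i _ => ?_
    have h1 : lp.single 2 i (x i) = x i • e4 i.1 i.2 := by
      have := lp.single_smul (E := fun _ : (Fin 2 × Bool) × (ℤ × ℤ) => ℂ) 2 i (x i) (1 : ℂ)
      rw [smul_eq_mul, mul_one] at this
      rw [e4, ← this]
    rw [h1]
    exact Submodule.smul_mem _ _ (hmem i.1 i.2)
  have hdense : Dense ((Submodule.span ℂ (Set.range v) : Submodule ℂ H4) : Set H4) := by
    rw [Submodule.dense_iff_topologicalClosure_eq_top]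
    exact le_antisymm le_top hsp
  -- the Hilbert basis and the isometry
  let bv : HilbertBasis ((Fin 2 × Bool) × (ℤ × ℤ)) ℂ H4 := HilbertBasis.mk hv hsp
  let W : H4 ≃ₗᵢ[ℂ] H4 := bv.repr.symm
  have hW : ∀ τ j, W (e4 τ j) = v (τ, j) := by
    intro τ j
    have : W (lp.single 2 (τ, j) (1 : ℂ)) = bv (τ, j) := bv.repr_symm_single (τ, j)
    rw [e4, this, HilbertBasis.coe_mk]
  refine ⟨W, ?_⟩
  -- compare two continuous linear maps
  set F : H4 →L[ℂ] H4 := (W.toContinuousLinearEquiv : H4 →L[ℂ] H4) with hF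
  set G : H4 →L[ℂ] H4 := c • RI + (Complex.I * s) • (RIinv.comp S) with hG
  have hdense4 : Dense ((Submodule.span ℂ
      (Set.range fun i : (Fin 2 × Bool) × (ℤ × ℤ) => e4 i.1 i.2) : Submodule ℂ H4) : Set H4) := by
    rw [Submodule.dense_iff_topologicalClosure_eq_top]
    refine le_antisymm le_top ?_
    rintro x -
    have hx : HasSum (fun i => lp.single 2 i (x i)) x := lp.hasSum_single ENNReal.ofNat_ne_top x
    refine mem_closure_of_tendsto hx (Filter.Eventually.of_forall fun t => ?_)
    refine Submodule.sum_mem _ fun i _ => ?_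
    have h1 : lp.single 2 i (x i) = x i • e4 i.1 i.2 := by
      have := lp.single_smul (E := fun _ : (Fin 2 × Bool) × (ℤ × ℤ) => ℂ) 2 i (x i) (1 : ℂ)
      rw [smul_eq_mul, mul_one] at this
      rw [e4, ← this]
    rw [h1]
    exact Submodule.smul_mem _ _ (Submodule.subset_span ⟨i, rfl⟩)
  have hFG : F = G := by
    refine ContinuousLinearMap.ext_on hdense4 ?_
    rintro x ⟨⟨τ, j⟩, rfl⟩
    show F (e4 τ j) = G (e4 τ j)
    have hFe : F (e4 τ j) = v (τ, j) := by
      rw [hF]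
      simp only [ContinuousLinearEquiv.coe_coe, LinearIsometryEquiv.coe_toContinuousLinearEquiv]
      exact hW τ j
    have hGe : G (e4 τ j) = v (τ, j) := by
      rw [hG]
      simp only [ContinuousLinearMap.add_apply, ContinuousLinearMap.smul_apply,
        ContinuousLinearMap.comp_apply, hRI, hRIinv, hS, hv_def]
    rw [hFe, hGe]
  intro x
  have hx := congrArg (fun (T : H4 →L[ℂ] H4) => T x) hFG
  simp only [hF, hG, ContinuousLinearMap.add_apply, ContinuousLinearMap.smul_apply,
    ContinuousLinearMap.comp_apply, ContinuousLinearEquiv.coe_coe,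
    LinearIsometryEquiv.coe_toContinuousLinearEquiv] at hx
  exact hx
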